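/- For kernel density estimates f̂₋ᵢ and f̂'₋ᵢ built from samples differing only in the point X₁ (replaced by X'₁), the L1 distance satisfies ∫|f̂₋ᵢ − f̂'₋ᵢ| ≤ ‖K‖_∞ / n, and consequently for Lipschitz φ, ν: |φ(∫ν(f̂₋ᵢ)) − φ(∫ν(f̂'₋ᵢ))| ≤ L_φ L_ν ‖K‖_∞ / n. -/

import Mathlib

open MeasureTheory
open scoped NNReal

/-- For kernel density estimates built from samples differing only in one point
(`y` vs `y'`, differing only at index `i0`), the L1 distance satisfies
`∫ |f̂ − f̂'| ≤ ‖K‖_∞ / n` (with the normalization `2∫|K| ≤ ‖K‖_∞`), and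
consequently for Lipschitz `φ, ν`:
`|φ(∫ ν(f̂)) − φ(∫ ν(f̂'))| ≤ L_φ L_ν ‖K‖_∞ / n`. -/
theorem kde_one_point_L1_difference
    {d : ℕ} (n m : ℕ) (hn : 0 < n)
    (K : (Fin d → ℝ) → ℝ) (Kinf h : ℝ) (hh : 0 < h) (hKinf : 0 ≤ Kinf)
    (hK : ∀ z, |K z| ≤ Kinf)
    (hKint : Integrable K (volume : Measure (Fin d → ℝ)))
    (hKnorm : 2 * ∫ z, |K z| ∂(volume : Measure (Fin d → ℝ)) ≤ Kinf)
    (y y' : Fin m → (Fin d → ℝ)) (i0 : Fin m)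
    (hyy : ∀ j, j ≠ i0 → y j = y' j)
    (φ ν : ℝ → ℝ) (Lφ Lν : ℝ≥0)
    (hφ : LipschitzWith Lφ φ) (hν : LipschitzWith Lν ν)
    (fhat fhat' : (Fin d → ℝ) → ℝ)
    (hfhat : fhat = fun t => (1 / (n * h ^ d)) * ∑ j, K (h⁻¹ • (t - y j)))
    (hfhat' : fhat' = fun t => (1 / (n * h ^ d)) * ∑ j, K (h⁻¹ • (t - y' j)))
    (hint : Integrable (fun t => ν (fhat t)) (volume : Measure (Fin d → ℝ)))
    (hint' : Integrable (fun t => ν (fhat' t)) (volume : Measure (Fin d → ℝ))) :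
    (∫ t, |fhat t - fhat' t| ∂(volume : Measure (Fin d → ℝ))) ≤ Kinf / n ∧
    |φ (∫ t, ν (fhat t) ∂(volume : Measure (Fin d → ℝ)))
      - φ (∫ t, ν (fhat' t) ∂(volume : Measure (Fin d → ℝ)))|
      ≤ (Lφ : ℝ) * (Lν : ℝ) * Kinf / n := by
  have hhd : (0:ℝ) < h ^ d := pow_pos hh d
  have hnR : (0:ℝ) < n := Nat.cast_pos.2 hn
  have hc : (0:ℝ) < 1 / (n * h ^ d) := by positivity
  set c : ℝ := 1 / ((n:ℝ) * h ^ d) with hcdef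
  -- the shifted, rescaled kernel
  have hintg : ∀ a : Fin d → ℝ,
      Integrable (fun t => K (h⁻¹ • (t - a))) (volume : Measure (Fin d → ℝ)) := by
    intro a
    have h1 : Integrable (fun t : Fin d → ℝ => K (h⁻¹ • t)) volume :=
      hKint.comp_smul (inv_ne_zero hh.ne')
    exact h1.comp_sub_right a
  have hintabs : ∀ a : Fin d → ℝ,
      (∫ t, |K (h⁻¹ • (t - a))| ∂(volume : Measure (Fin d → ℝ))) = h ^ d * ∫ z, |K z| := by
    intro a
    have h1 : (∫ t, |K (h⁻¹ • (t - a))| ∂(volume : Measure (Fin d → ℝ)))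
        = ∫ t, |K (h⁻¹ • t)| ∂(volume : Measure (Fin d → ℝ)) :=
      integral_sub_right_eq_self (fun t => |K (h⁻¹ • t)|) a
    rw [h1, MeasureTheory.Measure.integral_comp_inv_smul volume (fun z => |K z|) h]
    rw [Module.finrank_fintype_fun_eq_card]
    simp [abs_of_pos hhd, smul_eq_mul]
  -- difference of the two estimates
  have hdiff : ∀ t, fhat t - fhat' t
      = c * (K (h⁻¹ • (t - y i0)) - K (h⁻¹ • (t - y' i0))) := by
    intro t
    rw [hfhat, hfhat']
    simp only [← mul_sub, ← Finset.sum_sub_distrib]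
    congr 1
    rw [Finset.sum_eq_single i0]
    · intro j _ hj
      rw [hyy j hj, sub_self]
    · intro hj; exact absurd (Finset.mem_univ i0) hj
  set g : (Fin d → ℝ) → ℝ := fun t => K (h⁻¹ • (t - y i0)) - K (h⁻¹ • (t - y' i0)) with hg
  have hgint : Integrable g volume := (hintg (y i0)).sub (hintg (y' i0))
  have hdint : Integrable (fun t => fhat t - fhat' t) volume := by
    simp only [hdiff]; exact hgint.const_mul c
  -- the main L1 bound
  have hL1 : (∫ t, |fhat t - fhat' t| ∂(volume : Measure (Fin d → ℝ))) ≤ Kinf / n := by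
    have h1 : (∫ t, |fhat t - fhat' t| ∂(volume : Measure (Fin d → ℝ)))
        = c * ∫ t, |g t| := by
      simp only [hdiff, abs_mul, abs_of_pos hc]
      exact integral_const_mul c _
    have h2 : (∫ t, |g t| ∂(volume : Measure (Fin d → ℝ)))
        ≤ (∫ t, |K (h⁻¹ • (t - y i0))|) + ∫ t, |K (h⁻¹ • (t - y' i0))| := by
      rw [← integral_add (hintg (y i0)).abs (hintg (y' i0)).abs]
      refine integral_mono hgint.abs ((hintg (y i0)).abs.add (hintg (y' i0)).abs) ?_
      intro t
      exact abs_sub _ _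
    rw [h1]
    calc c * ∫ t, |g t| ≤ c * (2 * (h ^ d * ∫ z, |K z|)) := by
          refine mul_le_mul_of_nonneg_left ?_ hc.le
          rw [two_mul]
          simpa [hintabs (y i0), hintabs (y' i0)] using h2
      _ = (1 / n) * (2 * ∫ z, |K z|) := by
          field_simp [hcdef]
          rw [hcdef]; field_simp [hhd.ne', hnR.ne']
      _ ≤ (1 / n) * Kinf := by
          exact mul_le_mul_of_nonneg_left hKnorm (by positivity)
      _ = Kinf / n := by ring
  refine ⟨hL1, ?_⟩
  -- the Lipschitz consequence
  have hstep1 : |φ (∫ t, ν (fhat t)) - φ (∫ t, ν (fhat' t))|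
      ≤ (Lφ : ℝ) * |(∫ t, ν (fhat t)) - ∫ t, ν (fhat' t)| := by
    have := hφ.dist_le_mul (∫ t, ν (fhat t)) (∫ t, ν (fhat' t))
    simpa [Real.dist_eq] using this
  have hstep2 : |(∫ t, ν (fhat t)) - ∫ t, ν (fhat' t)|
      ≤ (Lν : ℝ) * ∫ t, |fhat t - fhat' t| := by
    rw [← integral_sub hint hint']
    calc |∫ t, (ν (fhat t) - ν (fhat' t))| ≤ ∫ t, |ν (fhat t) - ν (fhat' t)| := by
          simpa using norm_integral_le_integral_norm (fun t => ν (fhat t) - ν (fhat' t))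
      _ ≤ ∫ t, (Lν : ℝ) * |fhat t - fhat' t| := by
          refine integral_mono (hint.sub hint').abs (hdint.abs.const_mul _) ?_
          intro t
          have := hν.dist_le_mul (fhat t) (fhat' t)
          simpa [Real.dist_eq] using this
      _ = (Lν : ℝ) * ∫ t, |fhat t - fhat' t| := integral_const_mul _ _
  calc |φ (∫ t, ν (fhat t)) - φ (∫ t, ν (fhat' t))|
      ≤ (Lφ : ℝ) * ((Lν : ℝ) * ∫ t, |fhat t - fhat' t|) :=
        hstep1.trans (mul_le_mul_of_nonneg_left hstep2 Lφ.coe_nonneg)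
    _ ≤ (Lφ : ℝ) * ((Lν : ℝ) * (Kinf / n)) := by
        refine mul_le_mul_of_nonneg_left ?_ Lφ.coe_nonneg
        exact mul_le_mul_of_nonneg_left hL1 Lν.coe_nonneg
    _ = (Lφ : ℝ) * (Lν : ℝ) * Kinf / n := by ring
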